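/- arXiv:1509.08748 — 4 statements merged into one kernel-verified Lean document; each statement's English description precedes it below -/
import Mathlib

section
/- Let P = (x, y) be an affine point of E(K) with 2P ≠ O. Then δ₂(x, 1) ≠ 0, the point 2P is again affine, and its x-coordinate equals δ₁(x, 1)/δ₂(x, 1). -/
/-!
Statement 0: Let `P = (x, y)` be an affine point of `E(K)` with `2 • P ≠ O`. Then
`δ₂(x, 1) ≠ 0`, the point `2 • P` is again affine, and its `x`-coordinate equals
`δ₁(x, 1) / δ₂(x, 1)`.
-/

open WeierstrassCurve

/-- The first duplication polynomial `δ₁(x₁,x₂) = x₁⁴ − b₄x₁²x₂² − 2b₆x₁x₂³ − b₈x₂⁴`. -/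
def delta1 {R : Type*} [CommRing R] (W : WeierstrassCurve R) (x₁ x₂ : R) : R :=
  x₁ ^ 4 - W.b₄ * x₁ ^ 2 * x₂ ^ 2 - 2 * W.b₆ * x₁ * x₂ ^ 3 - W.b₈ * x₂ ^ 4

/-- The second duplication polynomial `δ₂(x₁,x₂) = 4x₁³x₂ + b₂x₁²x₂² + 2b₄x₁x₂³ + b₆x₂⁴`. -/
def delta2 {R : Type*} [CommRing R] (W : WeierstrassCurve R) (x₁ x₂ : R) : R :=
  4 * x₁ ^ 3 * x₂ + W.b₂ * x₁ ^ 2 * x₂ ^ 2 + 2 * W.b₄ * x₁ * x₂ ^ 3 + W.b₆ * x₂ ^ 4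

open Classical in
theorem statement0 {K : Type*} [Field K] (W : Affine K) (hΔ : W.Δ ≠ 0)
    {x y : K} (h : W.Nonsingular x y)
    (h2 : 2 • (Affine.Point.some x y h : W.Point) ≠ 0) :
    delta2 W x 1 ≠ 0 ∧
    ∃ (x' y' : K) (h' : W.Nonsingular x' y'),
      2 • (Affine.Point.some x y h : W.Point) = Affine.Point.some x' y' h' ∧
      x' = delta1 W x 1 / delta2 W x 1 := by
  have hy : y ≠ W.negY x y := by
    intro hy
    exact h2 (by rw [two_smul]; exact Affine.Point.add_self_of_Y_eq hy)
  have heq := (Affine.equation_iff (W := W) x y).mp h.1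
  have hd : y - W.negY x y ≠ 0 := sub_ne_zero.mpr hy
  have hδ2 : delta2 W x 1 = (y - W.negY x y) ^ 2 := by
    simp only [delta2, Affine.negY, b₂, b₄, b₆]
    linear_combination -4 * heq
  have hδ2ne : delta2 W x 1 ≠ 0 := by rw [hδ2]; exact pow_ne_zero 2 hd
  refine ⟨hδ2ne, W.addX x x (W.slope x x y y), _, Affine.nonsingular_add h h (fun hxy => hy hxy.2),
    ?_, ?_⟩
  · rw [two_smul]
    exact Affine.Point.add_some (fun hxy => hy hxy.2)
  · rw [eq_div_iff hδ2ne, Affine.slope_of_Y_ne rfl hy, hδ2]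
    set n := 3 * x ^ 2 + 2 * W.a₂ * x + W.a₄ - W.a₁ * y with hn
    set d := y - W.negY x y with hdd
    have key : W.addX x x (n / d) * d ^ 2
        = n ^ 2 + W.a₁ * n * d - (W.a₂ + 2 * x) * d ^ 2 := by
      simp only [Affine.addX]
      field_simp
      ring
    rw [key, hn, hdd]
    simp only [delta1, Affine.negY, b₄, b₆, b₈]
    linear_combination (-4*W.a₂ - W.a₁^2 - 8*x) * heq
end

section
/- Let P ∈ E(ℚ_p) and let B ≥ 1 and M ≥ 2 be integers such that (1) there exists an integer M′ with 0 < M′ ≤ M and M′·μ(P) ∈ ℤ, and (2) ε(Q) ≤ B for every Q ∈ E(ℚ_p). Set m = ⌊log(BM²/3)/log 4⌋ and μ₀ = Σ_{n=0}^{m} 4^{−n−1} ε(2ⁿP). Then μ(P) is the unique rational number with denominator at most M lying in the interval [μ₀, μ₀ + 1/M²]. -/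
open WeierstrassCurve Classical

variable {p : ℕ} [Fact p.Prime]

/-- `min{v(x₁), v(x₂)}`, where terms with argument `0` are omitted from the minimum.
(This is only meaningful for `(x₁, x₂) ≠ (0, 0)`.) -/
noncomputable def vmin (x₁ x₂ : ℚ_[p]) : ℤ :=
  if x₁ = 0 then x₂.valuation
  else if x₂ = 0 then x₁.valuation
  else min x₁.valuation x₂.valuation

/-- The canonical pair of Kummer coordinates of a point `P`: `(1, 0)` if `P = O`, and
`(x(P), 1)` if `P` is affine.  (Any pair of Kummer coordinates for `P` is a nonzero
scalar multiple of this pair, and `ε` is independent of this choice.) -/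
noncomputable def kummer {W : Affine ℚ_[p]} : W.Point → ℚ_[p] × ℚ_[p]
  | .zero => (1, 0)
  | @Affine.Point.some _ _ _ x _ _ => (x, 1)

/-- The local error function
`ε(P) = min{v(δ₁(x₁,x₂)), v(δ₂(x₁,x₂))} − 4·min{v(x₁), v(x₂)}`,
computed on the canonical pair of Kummer coordinates of `P`. -/
noncomputable def eps (W : Affine ℚ_[p]) (P : W.Point) : ℤ :=
  vmin (delta1 W (kummer P).1 (kummer P).2) (delta2 W (kummer P).1 (kummer P).2)
    - 4 * vmin (kummer P).1 (kummer P).2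

lemma bezout {R : Type*} [CommRing R] (W : WeierstrassCurve R) (x : R) :
    ((256*W.b₈^2 + 864*W.b₄*W.b₆^2 - 384*W.b₄^2*W.b₈ + 144*W.b₄^4 - 176*W.b₂*W.b₆*W.b₈
        - 204*W.b₂*W.b₄^2*W.b₆ + W.b₂^2*W.b₆^2 + 48*W.b₂^2*W.b₄*W.b₈ - 4*W.b₂^2*W.b₄^3
        + 5*W.b₂^3*W.b₄*W.b₆ - W.b₂^4*W.b₈)
      + (-576*W.b₆*W.b₈ - 144*W.b₄^2*W.b₆ + 360*W.b₂*W.b₆^2 + 32*W.b₂*W.b₄*W.b₈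
        + 72*W.b₂*W.b₄^3 - 80*W.b₂^2*W.b₄*W.b₆ - 2*W.b₂^3*W.b₄^2 + 2*W.b₂^4*W.b₆) * x
      + (1296*W.b₆^2 - 384*W.b₄*W.b₈ + 288*W.b₄^3 - 336*W.b₂*W.b₄*W.b₆ + 16*W.b₂^2*W.b₈
        - 8*W.b₂^2*W.b₄^2 + 8*W.b₂^3*W.b₆) * x^2) * delta1 W x 1
    + ((729*W.b₆^3 - 432*W.b₄*W.b₆*W.b₈ + 108*W.b₄^3*W.b₆ + 16*W.b₂*W.b₈^2
        - 162*W.b₂*W.b₄*W.b₆^2 + 36*W.b₂*W.b₄^2*W.b₈ + 7*W.b₂^2*W.b₆*W.b₈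
        - 3*W.b₂^2*W.b₄^2*W.b₆ + 4*W.b₂^3*W.b₆^2 - W.b₂^3*W.b₄*W.b₈)
      + (-64*W.b₈^2 + 270*W.b₄*W.b₆^2 - 48*W.b₄^2*W.b₈ + 72*W.b₄^4 + 8*W.b₂*W.b₆*W.b₈
        - 84*W.b₂*W.b₄^2*W.b₆ + 2*W.b₂^2*W.b₆^2 + 2*W.b₂^2*W.b₄*W.b₈ - 2*W.b₂^2*W.b₄^3
        + 2*W.b₂^3*W.b₄*W.b₆) * x
      + (144*W.b₆*W.b₈ + 36*W.b₄^2*W.b₆ - 9*W.b₂*W.b₆^2 - 32*W.b₂*W.b₄*W.b₈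
        - W.b₂^2*W.b₄*W.b₆ + W.b₂^3*W.b₈) * x^2
      + (-324*W.b₆^2 + 96*W.b₄*W.b₈ - 72*W.b₄^3 + 84*W.b₂*W.b₄*W.b₆ - 4*W.b₂^2*W.b₈
        + 2*W.b₂^2*W.b₄^2 - 2*W.b₂^3*W.b₆) * x^3) * delta2 W x 1
    = W.Δ ^ 2 := by
  simp only [delta1, delta2, WeierstrassCurve.Δ]
  linear_combination (-64*W.b₈^2 - 324*W.b₄*W.b₆^2 + 112*W.b₄^2*W.b₈ - 64*W.b₄^4
    + 32*W.b₂*W.b₆*W.b₈ + 80*W.b₂*W.b₄^2*W.b₆ - 4*W.b₂^2*W.b₆^2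
    - 12*W.b₂^2*W.b₄*W.b₈) * W.b_relation

lemma hp1 : (1:ℝ) < (p:ℝ) := by exact_mod_cast (Fact.out : p.Prime).one_lt

lemma val_le_val {x y : ℚ_[p]} (hx : x ≠ 0) (hy : y ≠ 0) (h : ‖x‖ ≤ ‖y‖) :
    y.valuation ≤ x.valuation := by
  rw [Padic.norm_eq_zpow_neg_valuation hx, Padic.norm_eq_zpow_neg_valuation hy,
    (zpow_right_strictMono₀ hp1).le_iff_le, neg_le_neg_iff] at h
  exact h

lemma val_eq_val {x y : ℚ_[p]} (hx : x ≠ 0) (hy : y ≠ 0) (h : ‖x‖ = ‖y‖) :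
    x.valuation = y.valuation := by
  have h1 := val_le_val hx hy h.le
  have h2 := val_le_val hy hx h.ge
  omega

lemma val_pow4 {x : ℚ_[p]} (hx : x ≠ 0) : (x^4).valuation = 4 * x.valuation := by
  rw [show x^4 = x*(x*(x*x)) by ring,
    Padic.valuation_mul hx (mul_ne_zero hx (mul_ne_zero hx hx)),
    Padic.valuation_mul hx (mul_ne_zero hx hx), Padic.valuation_mul hx hx]
  ring

lemma nm_add {x y : ℚ_[p]} (hx : ‖x‖ ≤ 1) (hy : ‖y‖ ≤ 1) : ‖x + y‖ ≤ 1 :=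
  le_trans (Padic.nonarchimedean x y) (max_le hx hy)

lemma nm_sub {x y : ℚ_[p]} (hx : ‖x‖ ≤ 1) (hy : ‖y‖ ≤ 1) : ‖x - y‖ ≤ 1 := by
  rw [sub_eq_add_neg]
  exact nm_add hx (by rwa [norm_neg])

lemma nm_mul {x y : ℚ_[p]} (hx : ‖x‖ ≤ 1) (hy : ‖y‖ ≤ 1) : ‖x * y‖ ≤ 1 := by
  rw [norm_mul]; nlinarith [norm_nonneg x, norm_nonneg y]

lemma nm_pow {x : ℚ_[p]} (hx : ‖x‖ ≤ 1) (n : ℕ) : ‖x ^ n‖ ≤ 1 := by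
  rw [norm_pow]; exact pow_le_one₀ (norm_nonneg x) hx

lemma nm_nat (n : ℕ) : ‖(n : ℚ_[p])‖ ≤ 1 := by
  have := Padic.norm_int_le_one (p := p) (n : ℤ)
  push_cast at this; exact this

lemma nm_two : ‖(2 : ℚ_[p])‖ ≤ 1 := by simpa using nm_nat (p := p) 2

lemma nm_four : ‖(4 : ℚ_[p])‖ ≤ 1 := by simpa using nm_nat (p := p) 4

lemma nm_b (W : Affine ℚ_[p])
    (hint : ‖W.a₁‖ ≤ 1 ∧ ‖W.a₂‖ ≤ 1 ∧ ‖W.a₃‖ ≤ 1 ∧ ‖W.a₄‖ ≤ 1 ∧ ‖W.a₆‖ ≤ 1) :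
    ‖W.b₂‖ ≤ 1 ∧ ‖W.b₄‖ ≤ 1 ∧ ‖W.b₆‖ ≤ 1 ∧ ‖W.b₈‖ ≤ 1 := by
  obtain ⟨h1, h2, h3, h4, h6⟩ := hint
  refine ⟨?_, ?_, ?_, ?_⟩
  · exact nm_add (nm_pow h1 2) (nm_mul nm_four h2)
  · exact nm_add (nm_mul nm_two h4) (nm_mul h1 h3)
  · exact nm_add (nm_pow h3 2) (nm_mul nm_four h6)
  · rw [show W.b₈ = (W.a₁^2*W.a₆ + 4*W.a₂*W.a₆ - W.a₁*W.a₃*W.a₄) + (W.a₂*W.a₃^2 - W.a₄^2) by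
        rw [WeierstrassCurve.b₈]; ring]
    exact nm_add (nm_sub (nm_add (nm_mul (nm_pow h1 2) h6) (nm_mul (nm_mul nm_four h2) h6))
      (nm_mul (nm_mul h1 h3) h4)) (nm_sub (nm_mul h2 (nm_pow h3 2)) (nm_pow h4 2))

theorem eps_nonneg (W : Affine ℚ_[p]) (hΔ : W.Δ ≠ 0)
    (hint : ‖W.a₁‖ ≤ 1 ∧ ‖W.a₂‖ ≤ 1 ∧ ‖W.a₃‖ ≤ 1 ∧ ‖W.a₄‖ ≤ 1 ∧ ‖W.a₆‖ ≤ 1)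
    (Q : W.Point) : 0 ≤ eps W Q := by
  obtain ⟨hb2, hb4, hb6, hb8⟩ := nm_b W hint
  cases Q with
  | zero =>
    have h1 : delta1 W (1:ℚ_[p]) 0 = 1 := by simp [delta1]
    have h2 : delta2 W (1:ℚ_[p]) 0 = 0 := by simp [delta2]
    have : eps W .zero = vmin (delta1 W 1 0) (delta2 W 1 0) - 4 * vmin 1 0 := rfl
    rw [this, h1, h2]
    simp [vmin]
  | @some x y hxy =>
    have heps : eps W (.some x y hxy) = vmin (delta1 W x 1) (delta2 W x 1) - 4 * vmin x 1 := rfl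
    have hd1e : delta1 W x 1 = x^4 - W.b₄*x^2 - 2*W.b₆*x - W.b₈ := by
      simp only [delta1]; ring
    have hd2e : delta2 W x 1 = 4*x^3 + W.b₂*x^2 + 2*W.b₄*x + W.b₆ := by
      simp only [delta2]; ring
    have hnboth : ¬(delta1 W x 1 = 0 ∧ delta2 W x 1 = 0) := by
      rintro ⟨e1, e2⟩
      have hb := bezout W x
      rw [e1, e2, mul_zero, mul_zero, add_zero] at hb
      exact hΔ (pow_eq_zero_iff (two_ne_zero).symm.symm |>.mp hb.symm)
    by_cases hx1 : ‖x‖ ≤ 1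
    · -- integral case
      have hvx : vmin x 1 = 0 := by
        unfold vmin
        rcases eq_or_ne x 0 with rfl | hx0
        · simp
        · rw [if_neg hx0, if_neg one_ne_zero, Padic.valuation_one,
            min_eq_right ((Padic.norm_le_one_iff_val_nonneg x).mp hx1)]
      have hnd1 : ‖delta1 W x 1‖ ≤ 1 := by
        rw [hd1e]
        exact nm_sub (nm_sub (nm_sub (nm_pow hx1 4) (nm_mul hb4 (nm_pow hx1 2)))
          (nm_mul (nm_mul nm_two hb6) hx1)) hb8
      have hnd2 : ‖delta2 W x 1‖ ≤ 1 := by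
        rw [hd2e]
        exact nm_add (nm_add (nm_add (nm_mul nm_four (nm_pow hx1 3))
          (nm_mul hb2 (nm_pow hx1 2))) (nm_mul (nm_mul nm_two hb4) hx1)) hb6
      have hmin : 0 ≤ vmin (delta1 W x 1) (delta2 W x 1) := by
        unfold vmin
        rcases eq_or_ne (delta1 W x 1) 0 with e1 | e1
        · rw [if_pos e1]
          have e2 : delta2 W x 1 ≠ 0 := fun h => hnboth ⟨e1, h⟩
          exact (Padic.norm_le_one_iff_val_nonneg _).mp hnd2
        · rw [if_neg e1]
          rcases eq_or_ne (delta2 W x 1) 0 with e2 | e2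
          · rw [if_pos e2]
            exact (Padic.norm_le_one_iff_val_nonneg _).mp hnd1
          · rw [if_neg e2]
            exact le_min ((Padic.norm_le_one_iff_val_nonneg _).mp hnd1)
              ((Padic.norm_le_one_iff_val_nonneg _).mp hnd2)
      rw [heps, hvx]
      omega
    · -- non-integral case
      push_neg at hx1
      have hx0 : x ≠ 0 := by
        intro h; rw [h, norm_zero] at hx1; linarith
      have hxge : (1:ℝ) ≤ ‖x‖ := hx1.le
      have hxval : x.valuation ≤ 0 := by
        by_contra h
        push_neg at h
        exact absurd ((Padic.norm_le_one_iff_val_nonneg x).mpr h.le) (not_le.mpr hx1)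
      have hvx : vmin x 1 = x.valuation := by
        unfold vmin
        rw [if_neg hx0, if_neg one_ne_zero, Padic.valuation_one, min_eq_left hxval]
      have hx2 : (1:ℝ) < ‖x‖^2 := by nlinarith
      have h24 : ‖x‖^2 < ‖x‖^4 := by
        have e4 : ‖x‖^4 = ‖x‖^2 * ‖x‖^2 := by ring
        rw [e4]; nlinarith
      have hd1e' : delta1 W x 1 = x^4 + (-(W.b₄*x^2) - 2*W.b₆*x - W.b₈) := by
        rw [hd1e]; ring
      have hrn : ‖-(W.b₄*x^2) - 2*W.b₆*x - W.b₈‖ ≤ ‖x‖^2 := by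
        have e : -(W.b₄*x^2) - 2*W.b₆*x - W.b₈ = (-(W.b₄*x^2) + -(2*W.b₆*x)) + -W.b₈ := by ring
        rw [e]
        refine (Padic.nonarchimedean _ _).trans (max_le ((Padic.nonarchimedean _ _).trans
          (max_le ?_ ?_)) ?_)
        · rw [norm_neg, norm_mul, norm_pow]
          exact mul_le_of_le_one_left (by positivity) hb4
        · rw [norm_neg, norm_mul]
          calc ‖2*W.b₆‖ * ‖x‖ ≤ 1 * ‖x‖ := by
                have := nm_mul nm_two hb6
                nlinarith [norm_nonneg x]
            _ = ‖x‖ := one_mul _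
            _ ≤ ‖x‖^2 := by nlinarith
        · rw [norm_neg]
          nlinarith
      have hnx4 : ‖x^4‖ = ‖x‖^4 := norm_pow x 4
      have hneq : ‖x^4‖ ≠ ‖-(W.b₄*x^2) - 2*W.b₆*x - W.b₈‖ := by
        rw [hnx4]; intro h; rw [← h] at hrn; linarith
      have hnd1 : ‖delta1 W x 1‖ = ‖x‖^4 := by
        rw [hd1e', Padic.add_eq_max_of_ne hneq, hnx4,
          max_eq_left (hrn.trans h24.le)]
      have hd1ne : delta1 W x 1 ≠ 0 := by
        intro h; rw [h, norm_zero] at hnd1; nlinarith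
      have hvd1 : (delta1 W x 1).valuation = 4 * x.valuation := by
        rw [val_eq_val hd1ne (pow_ne_zero 4 hx0) (by rw [hnd1, hnx4]), val_pow4 hx0]
      have hnd2 : ‖delta2 W x 1‖ ≤ ‖x‖^4 := by
        rw [hd2e]
        refine (Padic.nonarchimedean _ _).trans (max_le ((Padic.nonarchimedean _ _).trans
          (max_le ((Padic.nonarchimedean _ _).trans (max_le ?_ ?_)) ?_)) ?_)
        · rw [norm_mul, norm_pow]
          have h4n := nm_four (p := p)
          nlinarith [norm_nonneg (4:ℚ_[p]), norm_nonneg x]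
        · rw [norm_mul, norm_pow]
          nlinarith [norm_nonneg W.b₂, norm_nonneg x]
        · rw [norm_mul]
          have := nm_mul nm_two hb4
          nlinarith [norm_nonneg (2*W.b₄), norm_nonneg x]
        · nlinarith [norm_nonneg W.b₆]
      rw [heps, hvx]
      unfold vmin
      rw [if_neg hd1ne]
      rcases eq_or_ne (delta2 W x 1) 0 with e2 | e2
      · rw [if_pos e2, hvd1]; omega
      · rw [if_neg e2]
        have hvd2 : 4 * x.valuation ≤ (delta2 W x 1).valuation := by
          have := val_le_val e2 (pow_ne_zero 4 hx0) (by rw [hnx4]; exact hnd2)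
          rwa [val_pow4 hx0] at this
        omega

/-- The local height correction function `μ(P) = Σ_{n=0}^∞ 4^{−n−1} ε(2ⁿP)`. -/
noncomputable def mu (W : Affine ℚ_[p]) (P : W.Point) : ℝ :=
  ∑' n : ℕ, (eps W ((2 ^ n : ℕ) • P) : ℝ) / 4 ^ (n + 1)

/-- The partial sum `μ₀ = Σ_{n=0}^{m} 4^{−n−1} ε(2ⁿP)`. -/
noncomputable def mu0 (W : Affine ℚ_[p]) (P : W.Point) (m : ℕ) : ℝ :=
  ∑ n ∈ Finset.range (m + 1), (eps W ((2 ^ n : ℕ) • P) : ℝ) / 4 ^ (n + 1)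

set_option maxHeartbeats 2000000 in
/-- Lemma: computing `μ(P)` from finitely many `ε(2ⁿP)`. -/
theorem statement3 (W : Affine ℚ_[p]) (hΔ : W.Δ ≠ 0)
    (hint : ‖W.a₁‖ ≤ 1 ∧ ‖W.a₂‖ ≤ 1 ∧ ‖W.a₃‖ ≤ 1 ∧ ‖W.a₄‖ ≤ 1 ∧ ‖W.a₆‖ ≤ 1)
    (P : W.Point)
    (B M : ℕ) (hB : 1 ≤ B) (hM : 2 ≤ M)
    (h1 : ∃ M' : ℕ, 0 < M' ∧ M' ≤ M ∧ ∃ k : ℤ, (M' : ℝ) * mu W P = (k : ℝ))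
    (h2 : ∀ Q : W.Point, eps W Q ≤ (B : ℤ))
    (m : ℕ) (hm : (m : ℤ) = ⌊Real.log (B * M ^ 2 / 3) / Real.log 4⌋) :
    ∃ q : ℚ, (q : ℝ) = mu W P ∧ q.den ≤ M ∧
      mu0 W P m ≤ (q : ℝ) ∧ (q : ℝ) ≤ mu0 W P m + 1 / (M : ℝ) ^ 2 ∧
      ∀ q' : ℚ, q'.den ≤ M → mu0 W P m ≤ (q' : ℝ) →
        (q' : ℝ) ≤ mu0 W P m + 1 / (M : ℝ) ^ 2 → q' = q := by
  have hepsn : ∀ Q, 0 ≤ eps W Q := eps_nonneg W hΔ hint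
  set f : ℕ → ℝ := fun n => (eps W ((2 ^ n : ℕ) • P) : ℝ) / 4 ^ (n + 1) with hfdef
  have hf0 : ∀ n, 0 ≤ f n := fun n => div_nonneg (by exact_mod_cast hepsn _) (by positivity)
  have hfB : ∀ n, f n ≤ (B:ℝ) / 4 ^ (n+1) := by
    intro n
    have he : ((eps W ((2 ^ n : ℕ) • P) : ℝ)) ≤ (B:ℝ) := by exact_mod_cast h2 _
    show ((eps W ((2 ^ n : ℕ) • P) : ℝ)) / 4 ^ (n + 1) ≤ (B:ℝ) / 4 ^ (n+1)
    gcongr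
  have hgeo : Summable (fun n : ℕ => (B:ℝ) / 4 ^ (n+1)) := by
    have he : (fun n : ℕ => (B:ℝ) / 4 ^ (n+1)) = fun n : ℕ => ((B:ℝ)/4) * (1/4:ℝ)^n := by
      funext n; rw [pow_succ, one_div, inv_pow]; ring
    rw [he]
    exact (summable_geometric_of_lt_one (by norm_num) (by norm_num)).mul_left _
  have hsum : Summable f := Summable.of_nonneg_of_le hf0 hfB hgeo
  have hmusplit := Summable.sum_add_tsum_nat_add (f := f) (m+1) hsum
  have hmu : mu W P = ∑' n, f n := rfl
  have hmu0 : mu0 W P m = ∑ n ∈ Finset.range (m+1), f n := rfl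
  set T := ∑' n : ℕ, f (n + (m+1)) with hTdef
  have hT0 : 0 ≤ T := tsum_nonneg (fun n => hf0 _)
  have hBpos : (0:ℝ) < B := by exact_mod_cast Nat.lt_of_lt_of_le Nat.zero_lt_one hB
  have hMpos : (0:ℝ) < M := by
    have h0 : (0:ℕ) < M := by omega
    exact_mod_cast h0
  have hM2pos : (0:ℝ) < (M:ℝ)^2 := by positivity
  have hMR : (2:ℝ) ≤ (M:ℝ) := by exact_mod_cast hM
  have hTle : T ≤ (B:ℝ) / (3 * 4^(m+1)) := by
    have hshift : Summable (fun n : ℕ => (B:ℝ)/4^((n+(m+1))+1)) :=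
      (summable_nat_add_iff (f := fun n : ℕ => (B:ℝ)/4^(n+1)) (m+1)).mpr hgeo
    have hshift2 : Summable (fun n : ℕ => f (n + (m+1))) :=
      (summable_nat_add_iff (f := f) (m+1)).mpr hsum
    have h1' : T ≤ ∑' n : ℕ, (B:ℝ)/4^((n+(m+1))+1) :=
      Summable.tsum_le_tsum (fun n => hfB _) hshift2 hshift
    have h2' : (fun n : ℕ => (B:ℝ)/4^((n+(m+1))+1)) = fun n : ℕ => ((B:ℝ)/4^(m+2)) * (1/4:ℝ)^n := by
      funext n
      rw [show n+(m+1)+1 = (m+2)+n by omega, pow_add]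
      rw [one_div, inv_pow]; ring
    rw [h2', tsum_mul_left, tsum_geometric_of_lt_one (by norm_num) (by norm_num)] at h1'
    calc T ≤ (B:ℝ)/4^(m+2) * (1-1/4:ℝ)⁻¹ := h1'
      _ = (B:ℝ)/(3*4^(m+1)) := by rw [pow_succ]; field_simp; ring
  have hq3 : (0:ℝ) < (B:ℝ) * (M:ℝ)^2 / 3 := by positivity
  have hlt : (B:ℝ) * (M:ℝ)^2 / 3 < 4 ^ (m+1) := by
    have hfl := Int.lt_floor_add_one (Real.log ((B:ℝ) * (M:ℝ)^2 / 3) / Real.log 4)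
    rw [← hm] at hfl
    push_cast at hfl
    have hlog4 : (0:ℝ) < Real.log 4 := Real.log_pos (by norm_num)
    have hlog : Real.log ((B:ℝ) * (M:ℝ)^2 / 3) < (m+1) * Real.log 4 := by
      rw [div_lt_iff₀ hlog4] at hfl
      linarith
    have h4 : Real.log ((4:ℝ)^(m+1)) = (m+1) * Real.log 4 := by
      rw [Real.log_pow]; push_cast; ring
    refine (Real.log_lt_log_iff hq3 (by positivity)).mp ?_
    rw [h4]
    exact_mod_cast hlog
  have hfinal : (B:ℝ)/(3*4^(m+1)) ≤ 1/(M:ℝ)^2 := by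
    rw [div_le_div_iff₀ (by positivity) hM2pos]
    linarith
  have hmul : mu0 W P m ≤ mu W P := by
    rw [hmu, hmu0, ← hmusplit]
    linarith
  have hmuu : mu W P ≤ mu0 W P m + 1/(M:ℝ)^2 := by
    rw [hmu, hmu0, ← hmusplit]
    linarith [hTle.trans hfinal]
  obtain ⟨M', hM'0, hM'M, k, hk⟩ := h1
  have hM'ne : ((M':ℝ)) ≠ 0 := Nat.cast_ne_zero.mpr (by omega)
  set q : ℚ := (k : ℚ) / (M' : ℚ) with hqdef
  have hqR : (q:ℝ) = mu W P := by
    rw [hqdef]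
    push_cast
    rw [div_eq_iff hM'ne]
    linarith
  have hden : q.den ≤ M := by
    have hdvd : ((q.den : ℤ)) ∣ ((M' : ℕ) : ℤ) := by
      rw [hqdef, show ((k:ℚ)/(M':ℚ)) = Rat.divInt k ((M':ℕ):ℤ) by rw [Rat.divInt_eq_div]; norm_num]
      exact Rat.den_dvd k ((M':ℕ):ℤ)
    have hdvd' : q.den ∣ M' := Int.natCast_dvd_natCast.mp hdvd
    exact le_trans (Nat.le_of_dvd (by omega) hdvd') hM'M
  have hloq : mu0 W P m ≤ (q:ℝ) := by rw [hqR]; exact hmul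
  have hhiq : (q:ℝ) ≤ mu0 W P m + 1/(M:ℝ)^2 := by rw [hqR]; exact hmuu
  refine ⟨q, hqR, hden, hloq, hhiq, ?_⟩
  intro q' hd' hlo' hhi'
  by_contra hne
  have hdpos : (0:ℝ) < (q.den:ℝ) := by exact_mod_cast q.pos
  have hd'pos : (0:ℝ) < (q'.den:ℝ) := by exact_mod_cast q'.pos
  have hdd : (0:ℝ) < (q'.den:ℝ) * (q.den:ℝ) := by positivity
  have hdleM : (q.den:ℝ) ≤ (M:ℝ) := by exact_mod_cast hden
  have hd'leM : (q'.den:ℝ) ≤ (M:ℝ) := by exact_mod_cast hd'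
  set z : ℤ := q'.num * q.den - q.num * q'.den with hzdef
  have k1 : (q:ℝ) * (q.den:ℝ) = (q.num:ℝ) := by exact_mod_cast congrArg (fun r : ℚ => (r:ℝ)) (Rat.mul_den_eq_num q)
  have k2 : (q':ℝ) * (q'.den:ℝ) = (q'.num:ℝ) := by exact_mod_cast congrArg (fun r : ℚ => (r:ℝ)) (Rat.mul_den_eq_num q')
  have key : ((q' : ℝ) - q) * ((q'.den:ℝ) * (q.den:ℝ)) = (z:ℝ) := by
    rw [hzdef]
    push_cast
    linear_combination (q.den:ℝ) * k2 - (q'.den:ℝ) * k1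
  have hzne : z ≠ 0 := by
    intro h0
    rw [h0] at key
    push_cast at key
    have hqq : (q':ℝ) = (q:ℝ) := by
      rcases mul_eq_zero.mp key with h | h
      · linarith [sub_eq_zero.mp h]
      · exact absurd h (ne_of_gt hdd)
    exact hne (by exact_mod_cast hqq)
  have habs1 : (1:ℝ) ≤ |(z:ℝ)| := by exact_mod_cast Int.one_le_abs hzne
  have hq'q : |(q':ℝ) - (q:ℝ)| ≤ 1/(M:ℝ)^2 := abs_le.mpr ⟨by linarith, by linarith⟩
  have hAM : |(q':ℝ) - (q:ℝ)| * (M:ℝ)^2 ≤ 1 := by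
    rw [← le_div_iff₀ hM2pos]
    simpa using hq'q
  have habs2 : |(q':ℝ) - (q:ℝ)| * ((q'.den:ℝ) * (q.den:ℝ)) = |(z:ℝ)| := by
    rw [← abs_of_pos hdd, ← abs_mul, key]
  have hA0 : 0 ≤ |(q':ℝ) - (q:ℝ)| := abs_nonneg _
  by_cases hdeq : q.den = q'.den
  · have hw : q'.num ≠ q.num := fun h => hne (Rat.ext h hdeq.symm)
    have hz2 : z = (q.den:ℤ) * (q'.num - q.num) := by
      rw [hzdef, ← hdeq]; ring
    have hzd : (q.den:ℝ) ≤ |(z:ℝ)| := by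
      have h1z : (1:ℤ) ≤ |q'.num - q.num| := Int.one_le_abs (sub_ne_zero.mpr hw)
      have : (q.den:ℤ) ≤ |z| := by
        rw [hz2, abs_mul, abs_of_nonneg (by positivity : (0:ℤ) ≤ (q.den:ℤ))]
        exact le_mul_of_one_le_right (by positivity) h1z
      exact_mod_cast this
    rw [← hdeq] at habs2
    have h1 : (q.den:ℝ) ≤ |(q':ℝ) - (q:ℝ)| * ((q.den:ℝ) * (q.den:ℝ)) := by rw [habs2]; exact hzd
    have h2 : |(q':ℝ) - (q:ℝ)| * ((q.den:ℝ) * (q.den:ℝ)) ≤ 1/(M:ℝ)^2 * ((q.den:ℝ) * (q.den:ℝ)) :=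
      mul_le_mul_of_nonneg_right hq'q (by positivity)
    have h4 : (q.den:ℝ) ≤ 1/(M:ℝ)^2 * ((q.den:ℝ) * (q.den:ℝ)) := le_trans h1 h2
    rw [div_mul_eq_mul_div, one_mul, le_div_iff₀ hM2pos] at h4
    have h5 : (M:ℝ)^2 ≤ (q.den:ℝ) := le_of_mul_le_mul_right (by linarith) hdpos
    have e2 : (M:ℝ)^2 = (M:ℝ)*(M:ℝ) := by ring
    have e3 : 2*(M:ℝ) ≤ (M:ℝ)*(M:ℝ) := mul_le_mul_of_nonneg_right hMR (by linarith)
    linarith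
  · have hlt2 : (q'.den:ℝ) * (q.den:ℝ) < (M:ℝ)^2 := by
      rcases Nat.lt_or_ge q.den q'.den with h | h
      · have hc : (q.den:ℝ) + 1 ≤ (q'.den:ℝ) := by exact_mod_cast h
        have t1 : (q'.den:ℝ)*(q.den:ℝ) ≤ (M:ℝ)*(q.den:ℝ) :=
          mul_le_mul_of_nonneg_right hd'leM hdpos.le
        have t2 : (M:ℝ)*(q.den:ℝ) ≤ (M:ℝ)*((M:ℝ)-1) :=
          mul_le_mul_of_nonneg_left (by linarith) (by linarith)
        have e2 : (M:ℝ)*((M:ℝ)-1) = (M:ℝ)^2 - M := by ring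
        linarith
      · have h' : q'.den < q.den := lt_of_le_of_ne h fun hcc => hdeq hcc.symm
        have hc : (q'.den:ℝ) + 1 ≤ (q.den:ℝ) := by exact_mod_cast h'
        have t1 : (q'.den:ℝ)*(q.den:ℝ) ≤ (q'.den:ℝ)*(M:ℝ) :=
          mul_le_mul_of_nonneg_left hdleM hd'pos.le
        have t2 : (q'.den:ℝ)*(M:ℝ) ≤ ((M:ℝ)-1)*(M:ℝ) :=
          mul_le_mul_of_nonneg_right (by linarith) (by linarith)
        have e2 : ((M:ℝ)-1)*(M:ℝ) = (M:ℝ)^2 - M := by ring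
        linarith
    have hApos : 0 < |(q':ℝ) - (q:ℝ)| := by
      rcases hA0.lt_or_eq with h | h
      · exact h
      · exfalso
        have hz0 : |(z:ℝ)| = 0 := by rw [← habs2, ← h, zero_mul]
        linarith
    have h6 : |(z:ℝ)| < |(q':ℝ) - (q:ℝ)| * (M:ℝ)^2 := by
      rw [← habs2]
      exact mul_lt_mul_of_pos_left hlt2 hApos
    linarith
end

section
/- Let a, b, x be real numbers with 0 < b < a and x > 0, and set a′ = (a+b)/2 and x′ = (x − ab + √((x+a²)(x+b²)))/2. Then x′ > 0, one has the identity x′ + a′² = (x + (a²+b²)/2 + √((x+a²)(x+b²)))/2, and the quantity s = 1 − (x′ + a′²)/(x + a²) satisfies 0 < s < 1 and s ≤ (1/2)·√((a² − b²)/(x + a²)) + (1/4)·(a² − b²)/(x + a²). -/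
/-!
Statement 13: Let `a, b, x` be real numbers with `0 < b < a` and `x > 0`, and set
`a′ = (a+b)/2` and `x′ = (x − ab + √((x+a²)(x+b²)))/2`.  Then `x′ > 0`, one has
`x′ + a′² = (x + (a²+b²)/2 + √((x+a²)(x+b²)))/2`, and `s = 1 − (x′ + a′²)/(x + a²)`
satisfies `0 < s < 1` and `s ≤ (1/2)·√((a² − b²)/(x + a²)) + (1/4)·(a² − b²)/(x + a²)`.
-/

private lemma aux_sq (u v : ℝ) (hv : 0 < v) (hvu : v < u) :
    (u - v) ^ 2 ≤ u ^ 2 - v ^ 2 := by nlinarith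

private lemma aux_bound (u v w : ℝ) (hu : 0 < u) (hkey : u - v ≤ w * u) :
    1 - (u + v) ^ 2 / 4 / u ^ 2 ≤ 1 / 2 * w + 1 / 4 * ((u ^ 2 - v ^ 2) / u ^ 2) := by
  rw [← sub_nonneg]
  have hune : u ≠ 0 := hu.ne'
  have heq : 1 / 2 * w + 1 / 4 * ((u ^ 2 - v ^ 2) / u ^ 2) - (1 - (u + v) ^ 2 / 4 / u ^ 2)
      = (w * u * u - (u - v) * u) / (2 * u ^ 2) := by
    field_simp
    ring
  rw [heq]
  apply div_nonneg _ (by positivity)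
  nlinarith [mul_le_mul_of_nonneg_right hkey hu.le]

theorem statement13 (a b x : ℝ) (hb : 0 < b) (hba : b < a) (hx : 0 < x)
    (a' x' s : ℝ) (ha' : a' = (a + b) / 2)
    (hx' : x' = (x - a * b + Real.sqrt ((x + a ^ 2) * (x + b ^ 2))) / 2)
    (hs : s = 1 - (x' + a' ^ 2) / (x + a ^ 2)) :
    0 < x' ∧
    x' + a' ^ 2 = (x + (a ^ 2 + b ^ 2) / 2 + Real.sqrt ((x + a ^ 2) * (x + b ^ 2))) / 2 ∧
    0 < s ∧ s < 1 ∧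
    s ≤ 1 / 2 * Real.sqrt ((a ^ 2 - b ^ 2) / (x + a ^ 2)) +
      1 / 4 * ((a ^ 2 - b ^ 2) / (x + a ^ 2)) := by
  have ha : 0 < a := hb.trans hba
  have hP : (0:ℝ) < x + a ^ 2 := by positivity
  have hQ : (0:ℝ) < x + b ^ 2 := by positivity
  set u := Real.sqrt (x + a ^ 2) with hu_def
  set v := Real.sqrt (x + b ^ 2) with hv_def
  have hu : 0 < u := Real.sqrt_pos.mpr hP
  have hv : 0 < v := Real.sqrt_pos.mpr hQ
  have hu2 : u ^ 2 = x + a ^ 2 := Real.sq_sqrt hP.le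
  have hv2 : v ^ 2 = x + b ^ 2 := Real.sq_sqrt hQ.le
  have hvu : v < u := by
    apply Real.sqrt_lt_sqrt hQ.le
    nlinarith
  have hr : Real.sqrt ((x + a ^ 2) * (x + b ^ 2)) = u * v :=
    Real.sqrt_mul hP.le _
  -- x' > 0
  have hab_uv : a * b < u * v := by
    nlinarith [mul_pos hu hv, mul_pos ha hb]
  have hx'pos : 0 < x' := by
    rw [hx', hr]; linarith
  -- identity
  have hid : x' + a' ^ 2 =
      (x + (a ^ 2 + b ^ 2) / 2 + Real.sqrt ((x + a ^ 2) * (x + b ^ 2))) / 2 := by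
    rw [hx', ha']; ring
  -- s bounds
  have hT_lt : x' + a' ^ 2 < x + a ^ 2 := by
    rw [hid, hr]
    nlinarith [mul_pos hu hv]
  have hT_pos : 0 < x' + a' ^ 2 := by positivity
  have hspos : 0 < s := by
    rw [hs]
    have : (x' + a' ^ 2) / (x + a ^ 2) < 1 := (div_lt_one hP).mpr hT_lt
    linarith
  have hslt : s < 1 := by
    rw [hs]
    have : 0 < (x' + a' ^ 2) / (x + a ^ 2) := div_pos hT_pos hP
    linarith
  -- the main bound
  set w := Real.sqrt ((a ^ 2 - b ^ 2) / (x + a ^ 2)) with hw_def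
  have hwnn : 0 ≤ w := Real.sqrt_nonneg _
  have hdnn : (0:ℝ) ≤ (a ^ 2 - b ^ 2) / (x + a ^ 2) := by
    apply div_nonneg _ hP.le; nlinarith
  have hw2 : w ^ 2 = (a ^ 2 - b ^ 2) / (x + a ^ 2) := Real.sq_sqrt hdnn
  have hwu2 : (w * u) ^ 2 = a ^ 2 - b ^ 2 := by
    rw [mul_pow, hw2, hu2, div_mul_cancel₀]
    exact hP.ne'
  have key : u - v ≤ w * u := by
    have h1 : (u - v) ^ 2 ≤ (w * u) ^ 2 := by
      rw [hwu2, show a ^ 2 - b ^ 2 = u ^ 2 - v ^ 2 by linarith]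
      exact aux_sq u v hv hvu
    calc u - v = Real.sqrt ((u - v) ^ 2) := (Real.sqrt_sq (by linarith)).symm
      _ ≤ Real.sqrt ((w * u) ^ 2) := Real.sqrt_le_sqrt h1
      _ = w * u := Real.sqrt_sq (mul_nonneg hwnn hu.le)
  have hd_eq : (a ^ 2 - b ^ 2) / (x + a ^ 2) = (u ^ 2 - v ^ 2) / u ^ 2 := by
    rw [hu2]
    congr 1
    linarith
  have hA : (x - a * b + u * v) / 2 + ((a + b) / 2) ^ 2 = (u + v) ^ 2 / 4 := by
    linear_combination -(hu2 + hv2) / 4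
  have hbound : s ≤ 1 / 2 * w + 1 / 4 * ((a ^ 2 - b ^ 2) / (x + a ^ 2)) := by
    rw [hs, hx', ha', hr, hA, hd_eq, ← hu2]
    exact aux_bound u v w hu key
  exact ⟨hx'pos, hid, hspos, hslt, hbound⟩
end

section
/- Let a be a real number and B ≥ 1 an integer. Then there is at most one rational number r/s in lowest terms with 1 ≤ s ≤ B² satisfying a ≤ r/s ≤ a + 1/(2sB²); that is, if r/s and r′/s′ are both in lowest terms with 1 ≤ s, s′ ≤ B², a ≤ r/s ≤ a + 1/(2sB²) and a ≤ r′/s′ ≤ a + 1/(2s′B²), then r/s = r′/s′. -/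
/-!
Statement 16: Let `a` be a real number and `B ≥ 1` an integer.  Then there is at most one
rational number `r/s` in lowest terms with `1 ≤ s ≤ B²` satisfying
`a ≤ r/s ≤ a + 1/(2sB²)`.
-/

theorem statement16 (a : ℝ) (B : ℤ) (hB : 1 ≤ B) (r s r' s' : ℤ)
    (hs1 : 1 ≤ s) (hsB : s ≤ B ^ 2) (hcop : IsCoprime r s)
    (hs1' : 1 ≤ s') (hsB' : s' ≤ B ^ 2) (hcop' : IsCoprime r' s')
    (h1 : a ≤ (r : ℝ) / s) (h2 : (r : ℝ) / s ≤ a + 1 / (2 * s * B ^ 2))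
    (h1' : a ≤ (r' : ℝ) / s') (h2' : (r' : ℝ) / s' ≤ a + 1 / (2 * s' * B ^ 2)) :
    (r : ℝ) / s = (r' : ℝ) / s' := by
  have hsR : (0:ℝ) < (s:ℝ) := by exact_mod_cast hs1
  have hsR' : (0:ℝ) < (s':ℝ) := by exact_mod_cast hs1'
  have hBR : (1:ℝ) ≤ (B:ℝ) := by exact_mod_cast hB
  have hB2 : (0:ℝ) < (B:ℝ)^2 := by positivity
  have hsBR : (s:ℝ) ≤ (B:ℝ)^2 := by exact_mod_cast hsB
  have hsBR' : (s':ℝ) ≤ (B:ℝ)^2 := by exact_mod_cast hsB'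
  by_contra hne
  have hd : r * s' - r' * s ≠ 0 := by
    intro h
    apply hne
    rw [div_eq_div_iff (ne_of_gt hsR) (ne_of_gt hsR')]
    have : r * s' = r' * s := by omega
    exact_mod_cast congrArg (fun x : ℤ => (x : ℝ)) this
  have heq : ((r:ℝ)/s - (r':ℝ)/s') * ((s:ℝ) * s') = ((r*s' - r'*s : ℤ) : ℝ) := by
    field_simp
    push_cast
    ring
  rcases hd.lt_or_gt with hlt | hlt
  · -- r*s' - r'*s ≤ -1, so r'/s' - r/s ≥ 1/(s s')
    have h1d : ((r*s' - r'*s : ℤ) : ℝ) ≤ -1 := by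
      have : r*s' - r'*s ≤ -1 := by omega
      exact_mod_cast this
    have key : (1:ℝ)/(s*s') ≤ (r':ℝ)/s' - (r:ℝ)/s := by
      rw [div_le_iff₀ (by positivity)]
      nlinarith [heq]
    have hub : (r':ℝ)/s' - (r:ℝ)/s ≤ 1/(2*s'*B^2) := by linarith
    have : (1:ℝ)/(s*s') ≤ 1/(2*s'*B^2) := le_trans key hub
    rw [div_le_div_iff₀ (by positivity) (by positivity)] at this
    nlinarith
  · have h1d : (1:ℝ) ≤ ((r*s' - r'*s : ℤ) : ℝ) := by
      have : 1 ≤ r*s' - r'*s := by omega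
      exact_mod_cast this
    have key : (1:ℝ)/(s*s') ≤ (r:ℝ)/s - (r':ℝ)/s' := by
      rw [div_le_iff₀ (by positivity)]
      nlinarith [heq]
    have hub : (r:ℝ)/s - (r':ℝ)/s' ≤ 1/(2*s*B^2) := by linarith
    have : (1:ℝ)/(s*s') ≤ 1/(2*s*B^2) := le_trans key hub
    rw [div_le_div_iff₀ (by positivity) (by positivity)] at this
    nlinarith
end
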